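/- Let U ⊆ ℚ^n be a ℚ-subspace and let N_U := {z ∈ ℂ^n : q₁z₁ + ⋯ + qₙzₙ = 0 for every q ∈ U}. Then the image of N_U under the coordinatewise complex exponential map exp : ℂ^n → (ℂ^×)^n equals the set {y ∈ (ℂ^×)^n : y₁^{m₁} ⋯ yₙ^{mₙ} = 1 for every m = (m₁,…,mₙ) ∈ U ∩ ℤ^n}. In particular, exp(N_U) is a subgroup of the multiplicative group (ℂ^×)^n. -/

import Mathlib

lemma mkQ_eq_zero_iff' {n : ℕ} (L : Submodule ℤ (Fin n → ℤ)) (x : Fin n → ℤ) :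
    L.mkQ x = 0 ↔ x ∈ L := by
  rw [Submodule.mkQ_apply, Submodule.Quotient.mk_eq_zero]

lemma exists_retraction (n : ℕ) (L : Submodule ℤ (Fin n → ℤ))
    (hL : ∀ (c : ℤ) (x : Fin n → ℤ), c ≠ 0 → c • x ∈ L → x ∈ L) :
    ∃ p : (Fin n → ℤ) →ₗ[ℤ] (Fin n → ℤ), (∀ x, p x ∈ L) ∧ (∀ x ∈ L, p x = x) := by
  haveI : NoZeroSMulDivisors ℤ ((Fin n → ℤ) ⧸ L) := by
    constructor
    intro c q h
    by_cases hc : c = 0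
    · exact Or.inl hc
    · right
      obtain ⟨x, rfl⟩ := L.mkQ_surjective q
      rw [← map_smul] at h
      rw [mkQ_eq_zero_iff'] at h ⊢
      exact hL c x hc h
  haveI : Module.Free ℤ ((Fin n → ℤ) ⧸ L) := Module.free_of_finite_type_torsion_free'
  obtain ⟨s, hs⟩ := Module.projective_lifting_property L.mkQ LinearMap.id L.mkQ_surjective
  refine ⟨LinearMap.id - s ∘ₗ L.mkQ, fun x => ?_, fun x hx => ?_⟩
  · rw [← mkQ_eq_zero_iff']
    have h2 := congrArg (fun f => f (L.mkQ x)) hs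
    simp only [LinearMap.comp_apply, LinearMap.id_apply] at h2
    simp only [LinearMap.sub_apply, LinearMap.comp_apply, LinearMap.id_apply, map_sub, h2,
      sub_self]
  · have h0 : L.mkQ x = 0 := (mkQ_eq_zero_iff' L x).mpr hx
    simp [h0]

lemma clear_denoms {n : ℕ} (q : Fin n → ℚ) :
    ∃ (d : ℤ) (m : Fin n → ℤ), 0 < d ∧ ∀ i, (m i : ℚ) = (d : ℚ) * q i := by
  refine ⟨∏ i, ((q i).den : ℤ), fun i => (∏ j, ((q j).den : ℤ)) / ((q i).den : ℤ) * (q i).num,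
    ?_, fun i => ?_⟩
  · positivity
  · simp only
    obtain ⟨e, he⟩ : ((q i).den : ℤ) ∣ ∏ j, ((q j).den : ℤ) :=
      Finset.dvd_prod_of_mem _ (Finset.mem_univ i)
    have hden : ((q i).den : ℤ) ≠ 0 := by exact_mod_cast (q i).den_nz
    have hnum : ((q i).den : ℚ) * q i = ((q i).num : ℚ) := by
      rw [mul_comm, Rat.mul_den_eq_num]
    rw [he, Int.mul_ediv_cancel_left e hden]
    push_cast
    rw [mul_comm ((q i).den : ℚ) (e : ℚ), mul_assoc, hnum]

theorem statement7 (n : ℕ) (U : Submodule ℚ (Fin n → ℚ)) :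
    ((fun z : Fin n → ℂ => fun i => Complex.exp (z i)) ''
        {z : Fin n → ℂ | ∀ q ∈ U, ∑ i, (q i : ℂ) * z i = 0}
      = {y : Fin n → ℂ | (∀ i, y i ≠ 0) ∧
          ∀ m : Fin n → ℤ, (fun i => (m i : ℚ)) ∈ U → ∏ i, y i ^ m i = 1})
    ∧ (1 : Fin n → ℂ) ∈ (fun z : Fin n → ℂ => fun i => Complex.exp (z i)) ''
        {z : Fin n → ℂ | ∀ q ∈ U, ∑ i, (q i : ℂ) * z i = 0}
    ∧ (∀ y ∈ (fun z : Fin n → ℂ => fun i => Complex.exp (z i)) ''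
          {z : Fin n → ℂ | ∀ q ∈ U, ∑ i, (q i : ℂ) * z i = 0},
        ∀ y' ∈ (fun z : Fin n → ℂ => fun i => Complex.exp (z i)) ''
          {z : Fin n → ℂ | ∀ q ∈ U, ∑ i, (q i : ℂ) * z i = 0},
        y * y' ∈ (fun z : Fin n → ℂ => fun i => Complex.exp (z i)) ''
          {z : Fin n → ℂ | ∀ q ∈ U, ∑ i, (q i : ℂ) * z i = 0})
    ∧ (∀ y ∈ (fun z : Fin n → ℂ => fun i => Complex.exp (z i)) ''
          {z : Fin n → ℂ | ∀ q ∈ U, ∑ i, (q i : ℂ) * z i = 0},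
        y⁻¹ ∈ (fun z : Fin n → ℂ => fun i => Complex.exp (z i)) ''
          {z : Fin n → ℂ | ∀ q ∈ U, ∑ i, (q i : ℂ) * z i = 0}) := by
  classical
  have key : (fun z : Fin n → ℂ => fun i => Complex.exp (z i)) ''
        {z : Fin n → ℂ | ∀ q ∈ U, ∑ i, (q i : ℂ) * z i = 0}
      = {y : Fin n → ℂ | (∀ i, y i ≠ 0) ∧
          ∀ m : Fin n → ℤ, (fun i => (m i : ℚ)) ∈ U → ∏ i, y i ^ m i = 1} := by
    ext y
    simp only [Set.mem_image, Set.mem_setOf_eq]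
    constructor
    · rintro ⟨z, hz, rfl⟩
      refine ⟨fun i => Complex.exp_ne_zero _, fun m hmU => ?_⟩
      have h1 := hz _ hmU
      have h2 : ∑ i, (m i : ℂ) * z i = 0 := by
        push_cast at h1
        exact h1
      calc ∏ i, Complex.exp (z i) ^ m i
          = ∏ i, Complex.exp ((m i : ℂ) * z i) := by
            exact Finset.prod_congr rfl fun i _ => (Complex.exp_int_mul (z i) (m i)).symm
        _ = Complex.exp (∑ i, (m i : ℂ) * z i) := (Complex.exp_sum _ _).symm
        _ = 1 := by rw [h2, Complex.exp_zero]
    · rintro ⟨hne, hprod⟩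
      set w : Fin n → ℂ := fun i => Complex.log (y i) with hw
      have hexpw : ∀ i, Complex.exp (w i) = y i := fun i => Complex.exp_log (hne i)
      have hkey : ∀ m : Fin n → ℤ, (fun i => (m i : ℚ)) ∈ U →
          ∃ s : ℤ, ∑ i, (m i : ℂ) * w i = (s : ℂ) * (2 * (Real.pi : ℂ) * Complex.I) := by
        intro m hmU
        rw [← Complex.exp_eq_one_iff, Complex.exp_sum]
        calc ∏ i, Complex.exp ((m i : ℂ) * w i)
            = ∏ i, y i ^ m i := by
              refine Finset.prod_congr rfl fun i _ => ?_
              rw [Complex.exp_int_mul, hexpw]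
          _ = 1 := hprod m hmU
      let t : (Fin n → ℤ) → ℤ := fun m =>
        if h : (fun i => (m i : ℚ)) ∈ U then (hkey m h).choose else 0
      have ht : ∀ m (h : (fun i => (m i : ℚ)) ∈ U),
          ∑ i, (m i : ℂ) * w i = (t m : ℂ) * (2 * (Real.pi : ℂ) * Complex.I) := by
        intro m h
        simp only [t, dif_pos h]
        exact (hkey m h).choose_spec
      let L : Submodule ℤ (Fin n → ℤ) :=
        { carrier := {m | (fun i => (m i : ℚ)) ∈ U}
          add_mem' := by
            intro a b ha hb
            have h := U.add_mem ha hb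
            have : (fun i => (((a + b) i : ℤ) : ℚ))
                = (fun i => (a i : ℚ)) + fun i => (b i : ℚ) := by
              funext i; simp only [Pi.add_apply]; push_cast; ring
            show (fun i => (((a + b) i : ℤ) : ℚ)) ∈ U
            rw [this]; exact h
          zero_mem' := by
            have h0 : (fun i => (((0 : Fin n → ℤ) i : ℤ) : ℚ)) = (0 : Fin n → ℚ) := by
              funext i; simp
            show (fun i => (((0 : Fin n → ℤ) i : ℤ) : ℚ)) ∈ U
            rw [h0]; exact U.zero_mem
          smul_mem' := by
            intro c a ha
            have h := U.smul_mem (c : ℚ) ha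
            have : (fun i => (((c • a) i : ℤ) : ℚ)) = (c : ℚ) • fun i => (a i : ℚ) := by
              funext i; simp only [Pi.smul_apply, smul_eq_mul]; push_cast; ring
            show (fun i => (((c • a) i : ℤ) : ℚ)) ∈ U
            rw [this]; exact h }
      have hLpure : ∀ (c : ℤ) (x : Fin n → ℤ), c ≠ 0 → c • x ∈ L → x ∈ L := by
        intro c x hc hcx
        have hcx' : (fun i => (((c • x) i : ℤ) : ℚ)) ∈ U := hcx
        have heq : (fun i => (((c • x) i : ℤ) : ℚ)) = (c : ℚ) • fun i => (x i : ℚ) := by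
          funext i; simp only [Pi.smul_apply, smul_eq_mul]; push_cast; ring
        rw [heq] at hcx'
        have hc' : (c : ℚ) ≠ 0 := by exact_mod_cast hc
        exact (U.smul_mem_iff hc').mp hcx'
      obtain ⟨p, hpL, hpid⟩ := exists_retraction n L hLpure
      let k : Fin n → ℤ := fun j => t (p (Pi.single j 1))
      have htp : ∀ j, ∑ i, ((p (Pi.single j 1)) i : ℂ) * w i
          = (k j : ℂ) * (2 * (Real.pi : ℂ) * Complex.I) := fun j => ht _ (hpL _)
      have hk : ∀ m ∈ L, (∑ j, m j * k j : ℤ) = t m := by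
        intro m hmL
        have hm' : m = ∑ j, m j • Pi.single j (1 : ℤ) := by
          conv_lhs => rw [← Finset.univ_sum_single m]
          refine Finset.sum_congr rfl fun j _ => ?_
          rw [← Pi.single_smul, smul_eq_mul, mul_one]
        have hpm : p m = ∑ j, m j • p (Pi.single j 1) := by
          conv_lhs => rw [hm']
          rw [map_sum]
          exact Finset.sum_congr rfl fun j _ => map_smul p _ _
        have hmain : ((∑ j, m j * k j : ℤ) : ℂ) * (2 * (Real.pi : ℂ) * Complex.I)
            = (t m : ℂ) * (2 * (Real.pi : ℂ) * Complex.I) := by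
          calc ((∑ j, m j * k j : ℤ) : ℂ) * (2 * (Real.pi : ℂ) * Complex.I)
              = ∑ j, (m j : ℂ) * ((k j : ℂ) * (2 * (Real.pi : ℂ) * Complex.I)) := by
                push_cast
                rw [Finset.sum_mul]
                exact Finset.sum_congr rfl fun j _ => by ring
            _ = ∑ j, (m j : ℂ) * ∑ i, ((p (Pi.single j 1)) i : ℂ) * w i := by
                refine Finset.sum_congr rfl fun j _ => ?_
                rw [htp j]
            _ = ∑ i, ((p m) i : ℂ) * w i := by
                rw [hpm]
                simp only [Finset.sum_apply, Pi.smul_apply, smul_eq_mul]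
                push_cast
                simp_rw [Finset.mul_sum, Finset.sum_mul]
                rw [Finset.sum_comm]
                exact Finset.sum_congr rfl fun i _ =>
                  Finset.sum_congr rfl fun j _ => by ring
            _ = ∑ i, (m i : ℂ) * w i := by rw [hpid m hmL]
            _ = (t m : ℂ) * (2 * (Real.pi : ℂ) * Complex.I) := ht m hmL
        have h2 : (2 * (Real.pi : ℂ) * Complex.I) ≠ 0 := by
          simp [Real.pi_ne_zero, Complex.I_ne_zero]
        have := mul_right_cancel₀ h2 hmain
        exact_mod_cast this
      refine ⟨fun i => w i - (k i : ℂ) * (2 * (Real.pi : ℂ) * Complex.I), ?_, ?_⟩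
      · intro q hq
        obtain ⟨d, m, hd, hdm⟩ := clear_denoms q
        have hmU : (fun i => (m i : ℚ)) ∈ U := by
          have heq : (fun i => (m i : ℚ)) = (d : ℚ) • q := by
            funext i
            rw [hdm i]
            rfl
          rw [heq]
          exact U.smul_mem _ hq
        have hmL : m ∈ L := hmU
        have hsum : ∑ i, (m i : ℂ) * (w i - (k i : ℂ) * (2 * (Real.pi : ℂ) * Complex.I))
            = 0 := by
          have e1 := ht m hmU
          have e2 : ((∑ j, m j * k j : ℤ) : ℂ) = (t m : ℂ) := by exact_mod_cast hk m hmL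
          have expand : ∑ i, (m i : ℂ) * (w i - (k i : ℂ) * (2 * (Real.pi : ℂ) * Complex.I))
              = (∑ i, (m i : ℂ) * w i)
                - ((∑ j, m j * k j : ℤ) : ℂ) * (2 * (Real.pi : ℂ) * Complex.I) := by
            push_cast
            rw [Finset.sum_mul, ← Finset.sum_sub_distrib]
            exact Finset.sum_congr rfl fun i _ => by ring
          rw [expand, e1, e2, sub_self]
        have hcast : ∀ i, (m i : ℂ) = (d : ℂ) * ((q i : ℚ) : ℂ) := by
          intro i
          exact_mod_cast congrArg (fun r : ℚ => (r : ℂ)) (hdm i)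
        have hd0 : (d : ℂ) ≠ 0 := by exact_mod_cast hd.ne'
        have hfin : (d : ℂ) * ∑ i, ((q i : ℚ) : ℂ)
            * (w i - (k i : ℂ) * (2 * (Real.pi : ℂ) * Complex.I)) = 0 := by
          rw [Finset.mul_sum]
          rw [← hsum]
          exact Finset.sum_congr rfl fun i _ => by rw [hcast i]; ring
        exact (mul_eq_zero.mp hfin).resolve_left hd0
      · funext i
        show Complex.exp (w i - (k i : ℂ) * (2 * (Real.pi : ℂ) * Complex.I)) = y i
        rw [Complex.exp_sub, Complex.exp_int_mul_two_pi_mul_I, div_one, hexpw]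
  refine ⟨key, ?_, ?_, ?_⟩
  · rw [key]
    refine ⟨fun i => one_ne_zero, fun m hm => ?_⟩
    simp
  · intro y hy y' hy'
    rw [key] at hy hy' ⊢
    obtain ⟨hy1, hy2⟩ := hy
    obtain ⟨hy1', hy2'⟩ := hy'
    refine ⟨fun i => mul_ne_zero (hy1 i) (hy1' i), fun m hm => ?_⟩
    simp only [Pi.mul_apply, mul_zpow]
    rw [Finset.prod_mul_distrib, hy2 m hm, hy2' m hm, mul_one]
  · intro y hy
    rw [key] at hy ⊢
    obtain ⟨hy1, hy2⟩ := hy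
    refine ⟨fun i => inv_ne_zero (hy1 i), fun m hm => ?_⟩
    simp only [Pi.inv_apply, inv_zpow]
    rw [Finset.prod_inv_distrib, hy2 m hm, inv_one]
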